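/- Let ε ∈ (0, 1/10), let k be a positive integer, and let p = 6·⌈k/ε⌉. Let X be a real-valued random variable on a probability space such that |X|^p is integrable, E[X^r] ≥ 0 for every integer r with 0 ≤ r ≤ p, and E[X^k] ≥ ε^k. Then E[(X+1)^p] ≥ (1+ε/2)^p. -/

import Mathlib

open MeasureTheory Nat

-- factorial bound: n! * e^n ≤ e * n^(n+1)
lemma fact_bound : ∀ n : ℕ, 1 ≤ n → (n ! : ℝ) * Real.exp n ≤ Real.exp 1 * (n : ℝ) ^ (n + 1) := by
  intro n hn
  induction n, hn using Nat.le_induction with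
  | base => simp [Nat.factorial]
  | succ n hn ih =>
    have hnp : (0:ℝ) < n := by exact_mod_cast hn
    have key : Real.exp 1 * (n:ℝ) ^ (n+1) ≤ ((n:ℝ)+1) ^ (n+1) := by
      have h1 : Real.exp (1/((n:ℝ)+1)) ≤ ((n:ℝ)+1)/n := by
        have h2 := Real.add_one_le_exp (-(1/((n:ℝ)+1)))
        have h3 : (0:ℝ) < (n:ℝ)+1 := by positivity
        have h6 : (0:ℝ) < Real.exp (1/((n:ℝ)+1)) := Real.exp_pos _
        rw [Real.exp_neg] at h2
        rw [le_div_iff₀ hnp]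
        have h8 : (0:ℝ) < (n:ℝ)/((n:ℝ)+1) := by positivity
        have h9 : ((n:ℝ)/((n:ℝ)+1)) * Real.exp (1/((n:ℝ)+1)) ≤ 1 := by
          have h10 : (n:ℝ)/((n:ℝ)+1) ≤ Real.exp (-(1/((n:ℝ)+1))) := by
            calc (n:ℝ)/((n:ℝ)+1) = -(1/((n:ℝ)+1)) + 1 := by field_simp; ring
              _ ≤ _ := Real.add_one_le_exp _
          calc ((n:ℝ)/((n:ℝ)+1)) * Real.exp (1/((n:ℝ)+1))
              ≤ Real.exp (-(1/((n:ℝ)+1))) * Real.exp (1/((n:ℝ)+1)) :=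
                mul_le_mul_of_nonneg_right h10 h6.le
            _ = 1 := by rw [← Real.exp_add]; simp
        calc Real.exp (1/((n:ℝ)+1)) * (n:ℝ)
            = (((n:ℝ)/((n:ℝ)+1)) * Real.exp (1/((n:ℝ)+1))) * ((n:ℝ)+1) := by field_simp
          _ ≤ 1 * ((n:ℝ)+1) := by apply mul_le_mul_of_nonneg_right h9 h3.le
          _ = (n:ℝ)+1 := one_mul _
      have h7 : Real.exp 1 = Real.exp (1/((n:ℝ)+1)) ^ (n+1) := by
        rw [← Real.exp_nat_mul]
        congr 1
        push_cast
        field_simp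
      calc Real.exp 1 * (n:ℝ)^(n+1) ≤ (((n:ℝ)+1)/n)^(n+1) * (n:ℝ)^(n+1) := by
            apply mul_le_mul_of_nonneg_right _ (by positivity)
            rw [h7]
            exact pow_le_pow_left₀ (Real.exp_pos _).le h1 _
        _ = ((n:ℝ)+1)^(n+1) := by
            rw [← mul_pow, div_mul_cancel₀]
            exact hnp.ne'
    have hfact : ((n+1)! : ℝ) = ((n:ℝ)+1) * (n ! : ℝ) := by
      rw [Nat.factorial_succ]; push_cast; ring
    have hexp : Real.exp ((n:ℝ)+1) = Real.exp n * Real.exp 1 := by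
      rw [← Real.exp_add]
    have ihp : (0:ℝ) < ((n:ℝ)+1) := by positivity
    calc ((n+1)! : ℝ) * Real.exp ((n:ℕ)+1 : ℕ)
        = ((n:ℝ)+1) * ((n ! : ℝ) * Real.exp n) * Real.exp 1 := by
          push_cast [hfact]
          rw [hexp]; ring
      _ ≤ ((n:ℝ)+1) * (Real.exp 1 * (n:ℝ)^(n+1)) * Real.exp 1 := by
          apply mul_le_mul_of_nonneg_right _ (Real.exp_pos 1).le
          exact mul_le_mul_of_nonneg_left ih ihp.le
      _ = (Real.exp 1 * (n:ℝ)^(n+1)) * (((n:ℝ)+1) * Real.exp 1) := by ring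
      _ ≤ ((n:ℝ)+1)^(n+1) * (((n:ℝ)+1) * Real.exp 1) := by
          apply mul_le_mul_of_nonneg_right key (by positivity)
      _ = Real.exp 1 * ((n:ℝ)+1)^(n+2) := by ring
      _ = Real.exp 1 * (((n:ℕ)+1 : ℕ):ℝ)^(n+1+1) := by push_cast; ring

lemma numAux : ∀ k : ℕ, 1 ≤ k →
    (40/7) * 2.719 * (k:ℝ) * (2.719:ℝ)^k ≤ 2*(8.41:ℝ)^k + (3.8416 * 7.387524 : ℝ)^k := by
  intro k hk
  induction k, hk using Nat.le_induction with
  | base => norm_num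
  | succ k hk ih =>
    have hkp : (1:ℝ) ≤ (k:ℝ) := by exact_mod_cast hk
    have p1 : (0:ℝ) < (2.719:ℝ)^k := by positivity
    have p2 : (0:ℝ) < (8.41:ℝ)^k := by positivity
    have p3 : (0:ℝ) < (3.8416 * 7.387524 : ℝ)^k := by positivity
    have step : (40/7) * 2.719 * ((k:ℝ)+1) * (2.719:ℝ)^(k+1)
        ≤ 8.41 * ((40/7) * 2.719 * (k:ℝ) * (2.719:ℝ)^k) := by
      rw [pow_succ]
      nlinarith
    calc (40/7) * 2.719 * (((k:ℕ)+1:ℕ):ℝ) * (2.719:ℝ)^(k+1)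
        = (40/7) * 2.719 * ((k:ℝ)+1) * (2.719:ℝ)^(k+1) := by push_cast; ring
      _ ≤ 8.41 * ((40/7) * 2.719 * (k:ℝ) * (2.719:ℝ)^k) := step
      _ ≤ 8.41 * (2*(8.41:ℝ)^k + (3.8416 * 7.387524 : ℝ)^k) := by nlinarith
      _ ≤ 2*(8.41:ℝ)^(k+1) + (3.8416 * 7.387524 : ℝ)^(k+1) := by
          rw [pow_succ, pow_succ]
          nlinarith

lemma sq_int_le {Ω : Type*} [MeasurableSpace Ω] (μ : Measure Ω) [IsProbabilityMeasure μ]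
    (Y : Ω → ℝ) (hY : AEStronglyMeasurable Y μ) (h2 : Integrable (fun ω => Y ω ^ 2) μ) :
    (∫ ω, Y ω ∂μ)^2 ≤ ∫ ω, Y ω ^ 2 ∂μ := by
  have hm : MemLp Y 2 μ := (memLp_two_iff_integrable_sq hY).2 h2
  have hv := ProbabilityTheory.variance_nonneg Y μ
  rw [ProbabilityTheory.variance_eq_sub hm] at hv
  simp only [Pi.pow_apply] at hv
  linarith

set_option maxHeartbeats 1000000 in
/-- Unbalancing inequality (Lemma 4.1 of the paper): a real random variable with
nonnegative moments and a large `k`-th moment has a large `p`-th moment after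
shifting by one. -/
theorem unbalancing
    (ε : ℝ) (hε : ε ∈ Set.Ioo (0 : ℝ) (1 / 10)) (k : ℕ) (hk : 0 < k)
    (p : ℕ) (hp : p = 6 * ⌈(k : ℝ) / ε⌉₊)
    (Ω : Type*) [MeasurableSpace Ω] (μ : Measure Ω) [IsProbabilityMeasure μ]
    (X : Ω → ℝ) (hX : Measurable X)
    (hint : Integrable (fun ω => |X ω| ^ p) μ)
    (hmom : ∀ r : ℕ, r ≤ p → 0 ≤ ∫ ω, X ω ^ r ∂μ)
    (hkth : ε ^ k ≤ ∫ ω, X ω ^ k ∂μ) :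
    (1 + ε / 2) ^ p ≤ ∫ ω, (X ω + 1) ^ p ∂μ := by
  obtain ⟨hε0, hε1⟩ := hε
  have hkR : (1:ℝ) ≤ (k:ℝ) := by exact_mod_cast hk
  -- bounds relating p, k, ε
  have hkK : k ≤ ⌈(k : ℝ) / ε⌉₊ := by
    have h1 : (k:ℝ) ≤ (k:ℝ)/ε := by
      rw [le_div_iff₀ hε0]; nlinarith
    exact_mod_cast Nat.cast_le.mp (h1.trans (Nat.le_ceil _))
  have h4kp : 4*k ≤ p := by omega
  have h2kp : 2*k ≤ p := by omega
  have hpl : 6*(k:ℝ)/ε ≤ (p:ℝ) := by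
    rw [hp]
    push_cast
    have := Nat.le_ceil ((k:ℝ)/ε)
    rw [mul_div_assoc]
    linarith
  have hpu : (p:ℝ) ≤ 6*(k:ℝ)/ε + 6 := by
    rw [hp]
    push_cast
    have := Nat.ceil_lt_add_one (show (0:ℝ) ≤ (k:ℝ)/ε by positivity)
    rw [mul_div_assoc]
    linarith
  have hpe_l : 6*(k:ℝ) ≤ (p:ℝ)*ε := by
    have h := mul_le_mul_of_nonneg_right hpl hε0.le
    rw [div_mul_cancel₀] at h
    · linarith
    · exact hε0.ne'
  have hpe_u : (p:ℝ)*ε ≤ 6*(k:ℝ) + 6*ε := by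
    have h := mul_le_mul_of_nonneg_right hpu hε0.le
    rw [add_mul, div_mul_cancel₀] at h
    · linarith
    · exact hε0.ne'
  -- integrability of powers
  have hXr : ∀ r, r ≤ p → Integrable (fun ω => X ω ^ r) μ := by
    intro r hr
    apply Integrable.mono' ((integrable_const (1:ℝ)).add hint)
    · exact (hX.pow_const r).aestronglyMeasurable
    · filter_upwards with ω
      have hb : ‖X ω ^ r‖ = |X ω| ^ r := by rw [norm_pow, Real.norm_eq_abs]
      simp only [Pi.add_apply]
      rw [hb]
      rcases le_total (|X ω|) 1 with h | h
      · have h1 : |X ω| ^ r ≤ 1 := pow_le_one₀ (abs_nonneg _) h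
        have h2 : (0:ℝ) ≤ |X ω| ^ p := by positivity
        linarith
      · have h1 : |X ω| ^ r ≤ |X ω| ^ p := pow_le_pow_right₀ h hr
        linarith
  have hint1 : Integrable (fun ω => (X ω + 1) ^ p) μ := by
    apply Integrable.mono' (((integrable_const (1:ℝ)).add hint).const_mul ((2:ℝ)^p))
    · exact ((hX.add_const 1).pow_const p).aestronglyMeasurable
    · filter_upwards with ω
      simp only [Pi.add_apply]
      have h1 : |X ω + 1| ≤ 2 * max (|X ω|) 1 := by
        calc |X ω + 1| ≤ |X ω| + 1 := by
              have := abs_add_le (X ω) 1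
              simpa using this
          _ ≤ max (|X ω|) 1 + max (|X ω|) 1 :=
              add_le_add (le_max_left _ _) (le_max_right _ _)
          _ = 2 * max (|X ω|) 1 := by ring
      calc ‖(X ω + 1) ^ p‖ = |X ω + 1| ^ p := by rw [norm_pow, Real.norm_eq_abs]
        _ ≤ (2 * max (|X ω|) 1) ^ p := pow_le_pow_left₀ (abs_nonneg _) h1 p
        _ = 2 ^ p * (max (|X ω|) 1) ^ p := mul_pow _ _ _
        _ ≤ 2 ^ p * (1 + |X ω| ^ p) := by
            apply mul_le_mul_of_nonneg_left _ (by positivity)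
            rcases max_cases (|X ω|) 1 with ⟨h2, h3⟩ | ⟨h2, h3⟩ <;> rw [h2]
            · have : (0:ℝ) ≤ 1 := zero_le_one
              linarith [pow_nonneg (abs_nonneg (X ω)) p]
            · have : (0:ℝ) ≤ |X ω| ^ p := by positivity
              rw [one_pow]; linarith
  -- binomial expansion of the integral
  have hexpand : ∫ ω, (X ω + 1) ^ p ∂μ
      = ∑ r ∈ Finset.range (p+1), (p.choose r : ℝ) * ∫ ω, X ω ^ r ∂μ := by
    have hpt : ∀ ω, (X ω + 1) ^ p
        = ∑ r ∈ Finset.range (p+1), (p.choose r : ℝ) * X ω ^ r := by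
      intro ω
      rw [add_pow]
      exact Finset.sum_congr rfl fun i _ => by rw [one_pow]; ring
    simp_rw [hpt]
    rw [integral_finset_sum]
    · exact Finset.sum_congr rfl fun r hr => integral_const_mul _ _
    · intro r hr
      exact (hXr r (Nat.lt_succ_iff.mp (Finset.mem_range.mp hr))).const_mul _
  -- moment bounds
  have hmm2 : ε ^ (2*k) ≤ ∫ ω, X ω ^ (2*k) ∂μ := by
    have hsq := sq_int_le μ (fun ω => X ω ^ k) (hX.pow_const k).aestronglyMeasurable
      (by simpa [← pow_mul, mul_comm k 2] using hXr (2*k) h2kp)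
    calc ε ^ (2*k) = (ε ^ k) ^ 2 := by rw [← pow_mul, mul_comm]
      _ ≤ (∫ ω, X ω ^ k ∂μ) ^ 2 := by
          apply pow_le_pow_left₀ (by positivity) hkth
      _ ≤ ∫ ω, (X ω ^ k) ^ 2 ∂μ := hsq
      _ = ∫ ω, X ω ^ (2*k) ∂μ := by simp_rw [← pow_mul, mul_comm k 2]
  have hmm4 : ε ^ (4*k) ≤ ∫ ω, X ω ^ (4*k) ∂μ := by
    have hsq := sq_int_le μ (fun ω => X ω ^ (2*k)) (hX.pow_const (2*k)).aestronglyMeasurable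
      (by simpa [← pow_mul, show 2*k*2 = 4*k by ring] using hXr (4*k) h4kp)
    calc ε ^ (4*k) = (ε ^ (2*k)) ^ 2 := by rw [← pow_mul]; ring_nf
      _ ≤ (∫ ω, X ω ^ (2*k) ∂μ) ^ 2 := by
          apply pow_le_pow_left₀ (by positivity) hmm2
      _ ≤ ∫ ω, (X ω ^ (2*k)) ^ 2 ∂μ := hsq
      _ = ∫ ω, X ω ^ (4*k) ∂μ := by simp_rw [← pow_mul, show 2*k*2 = 4*k by ring]
  -- binomial coefficient lower bounds
  have hdesc : ∀ m, m ≤ p → ((p:ℝ) + 1 - m) ^ m ≤ (p.choose m : ℝ) * (Nat.factorial m : ℝ) := by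
    intro m hm
    have h1 := Nat.pow_sub_le_descFactorial p m
    rw [Nat.descFactorial_eq_factorial_mul_choose] at h1
    have h2 : (((p + 1 - m : ℕ) : ℝ)) ^ m ≤ (Nat.factorial m : ℝ) * (p.choose m : ℝ) := by
      exact_mod_cast h1
    rw [Nat.cast_sub (by omega)] at h2
    push_cast at h2
    linarith [h2]
  -- exp/choose machinery
  set u := Real.exp 1 with hu
  have hu_pos : (0:ℝ) < u := Real.exp_pos 1
  have hu1 : (2.718:ℝ) ≤ u := by
    have := Real.exp_one_gt_d9
    rw [hu]; norm_num at this ⊢; linarith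
  have hu2 : u ≤ (2.719:ℝ) := by
    have := Real.exp_one_lt_d9
    rw [hu]; norm_num at this ⊢; linarith
  have hexpnat : ∀ n : ℕ, Real.exp ((n:ℕ):ℝ) = u ^ n := by
    intro n
    rw [hu, ← Real.exp_nat_mul, mul_one]
  have hfact2 : (0:ℝ) < (Nat.factorial (2*k) : ℝ) := by
    exact_mod_cast Nat.factorial_pos (2*k)
  have hfact4 : (0:ℝ) < (Nat.factorial (4*k) : ℝ) := by
    exact_mod_cast Nat.factorial_pos (4*k)
  -- T2 bound
  have hT2 : (2.9:ℝ)^(2*k) * u^(2*k)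
      ≤ u * (2*(k:ℝ)) * ((p.choose (2*k) : ℝ) * ε^(2*k)) := by
    have hkey2 : (5.8*(k:ℝ))^(2*k)
        ≤ ((p.choose (2*k):ℝ) * ε^(2*k)) * (Nat.factorial (2*k) : ℝ) := by
      have hd2 := hdesc (2*k) h2kp
      push_cast at hd2
      have hb : 5.8*(k:ℝ) ≤ ((p:ℝ)+1-2*(k:ℝ))*ε := by nlinarith
      calc (5.8*(k:ℝ))^(2*k) ≤ (((p:ℝ)+1-2*(k:ℝ))*ε)^(2*k) :=
            pow_le_pow_left₀ (by positivity) hb _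
        _ = ((p:ℝ)+1-2*(k:ℝ))^(2*k) * ε^(2*k) := mul_pow _ _ _
        _ ≤ ((p.choose (2*k):ℝ) * (Nat.factorial (2*k):ℝ)) * ε^(2*k) :=
            mul_le_mul_of_nonneg_right hd2 (by positivity)
        _ = ((p.choose (2*k):ℝ) * ε^(2*k)) * (Nat.factorial (2*k) : ℝ) := by ring
    have hfb2 := fact_bound (2*k) (by omega)
    rw [hexpnat (2*k)] at hfb2
    push_cast at hfb2
    have hba : (2.9:ℝ)*(2*(k:ℝ)) = 5.8*(k:ℝ) := by ring
    have hchain : ((2.9:ℝ)^(2*k) * u^(2*k)) * (Nat.factorial (2*k):ℝ)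
        ≤ (u * (2*(k:ℝ)) * ((p.choose (2*k):ℝ) * ε^(2*k))) * (Nat.factorial (2*k):ℝ) := by
      calc ((2.9:ℝ)^(2*k) * u^(2*k)) * (Nat.factorial (2*k):ℝ)
          = (2.9:ℝ)^(2*k) * ((Nat.factorial (2*k):ℝ) * u^(2*k)) := by ring
        _ ≤ (2.9:ℝ)^(2*k) * (u * (2*(k:ℝ))^(2*k+1)) :=
            mul_le_mul_of_nonneg_left hfb2 (by positivity)
        _ = (u * (2*(k:ℝ))) * (5.8*(k:ℝ))^(2*k) := by
            have hsplit : ((2.9:ℝ)*(2*(k:ℝ)))^(2*k) = (2.9:ℝ)^(2*k) * (2*(k:ℝ))^(2*k) :=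
              mul_pow _ _ _
            rw [← hba, hsplit, pow_succ]; ring
        _ ≤ (u * (2*(k:ℝ))) * (((p.choose (2*k):ℝ) * ε^(2*k)) * (Nat.factorial (2*k) : ℝ)) :=
            mul_le_mul_of_nonneg_left hkey2 (by positivity)
        _ = (u * (2*(k:ℝ)) * ((p.choose (2*k):ℝ) * ε^(2*k))) * (Nat.factorial (2*k):ℝ) := by
            ring
    exact le_of_mul_le_mul_right hchain hfact2
  -- T4 bound
  have hT4 : (1.4:ℝ)^(4*k) * u^(4*k)
      ≤ u * (4*(k:ℝ)) * ((p.choose (4*k) : ℝ) * ε^(4*k)) := by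
    have hkey4 : (5.6*(k:ℝ))^(4*k)
        ≤ ((p.choose (4*k):ℝ) * ε^(4*k)) * (Nat.factorial (4*k) : ℝ) := by
      have hd4 := hdesc (4*k) h4kp
      push_cast at hd4
      have hb : 5.6*(k:ℝ) ≤ ((p:ℝ)+1-4*(k:ℝ))*ε := by nlinarith
      calc (5.6*(k:ℝ))^(4*k) ≤ (((p:ℝ)+1-4*(k:ℝ))*ε)^(4*k) :=
            pow_le_pow_left₀ (by positivity) hb _
        _ = ((p:ℝ)+1-4*(k:ℝ))^(4*k) * ε^(4*k) := mul_pow _ _ _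
        _ ≤ ((p.choose (4*k):ℝ) * (Nat.factorial (4*k):ℝ)) * ε^(4*k) :=
            mul_le_mul_of_nonneg_right hd4 (by positivity)
        _ = ((p.choose (4*k):ℝ) * ε^(4*k)) * (Nat.factorial (4*k) : ℝ) := by ring
    have hfb4 := fact_bound (4*k) (by omega)
    rw [hexpnat (4*k)] at hfb4
    push_cast at hfb4
    have hba : (1.4:ℝ)*(4*(k:ℝ)) = 5.6*(k:ℝ) := by ring
    have hchain : ((1.4:ℝ)^(4*k) * u^(4*k)) * (Nat.factorial (4*k):ℝ)
        ≤ (u * (4*(k:ℝ)) * ((p.choose (4*k):ℝ) * ε^(4*k))) * (Nat.factorial (4*k):ℝ) := by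
      calc ((1.4:ℝ)^(4*k) * u^(4*k)) * (Nat.factorial (4*k):ℝ)
          = (1.4:ℝ)^(4*k) * ((Nat.factorial (4*k):ℝ) * u^(4*k)) := by ring
        _ ≤ (1.4:ℝ)^(4*k) * (u * (4*(k:ℝ))^(4*k+1)) :=
            mul_le_mul_of_nonneg_left hfb4 (by positivity)
        _ = (u * (4*(k:ℝ))) * (5.6*(k:ℝ))^(4*k) := by
            have hsplit : ((1.4:ℝ)*(4*(k:ℝ)))^(4*k) = (1.4:ℝ)^(4*k) * (4*(k:ℝ))^(4*k) :=
              mul_pow _ _ _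
            rw [← hba, hsplit, pow_succ]; ring
        _ ≤ (u * (4*(k:ℝ))) * (((p.choose (4*k):ℝ) * ε^(4*k)) * (Nat.factorial (4*k) : ℝ)) :=
            mul_le_mul_of_nonneg_left hkey4 (by positivity)
        _ = (u * (4*(k:ℝ)) * ((p.choose (4*k):ℝ) * ε^(4*k))) * (Nat.factorial (4*k):ℝ) := by
            ring
    exact le_of_mul_le_mul_right hchain hfact4
  -- sum over the pair {2k, 4k}
  have hne : 2*k ≠ 4*k := by omega
  have hsub : ({2*k, 4*k} : Finset ℕ) ⊆ Finset.range (p+1) := by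
    intro x hx
    simp only [Finset.mem_insert, Finset.mem_singleton] at hx
    rcases hx with h | h <;> (rw [h]; exact Finset.mem_range.mpr (by omega))
  have hdrop : ∑ r ∈ ({2*k, 4*k} : Finset ℕ), (p.choose r : ℝ) * ∫ ω, X ω ^ r ∂μ
      ≤ ∑ r ∈ Finset.range (p+1), (p.choose r : ℝ) * ∫ ω, X ω ^ r ∂μ := by
    apply Finset.sum_le_sum_of_subset_of_nonneg hsub
    intro i hi _
    exact mul_nonneg (Nat.cast_nonneg _) (hmom i (Nat.lt_succ_iff.mp (Finset.mem_range.mp hi)))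
  have hpair : ∑ r ∈ ({2*k, 4*k} : Finset ℕ), (p.choose r : ℝ) * ∫ ω, X ω ^ r ∂μ
      = (p.choose (2*k) : ℝ) * ∫ ω, X ω ^ (2*k) ∂μ
        + (p.choose (4*k) : ℝ) * ∫ ω, X ω ^ (4*k) ∂μ := Finset.sum_pair hne
  -- first steps: upper bound of (1+ε/2)^p
  have hstep1 : (1+ε/2)^p ≤ Real.exp ((p:ℝ)*(ε/2)) := by
    calc (1+ε/2)^p ≤ (Real.exp (ε/2))^p := by
          apply pow_le_pow_left₀ (by linarith)
          linarith [Real.add_one_le_exp (ε/2)]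
      _ = Real.exp ((p:ℝ)*(ε/2)) := (Real.exp_nat_mul _ p).symm
  have hstep2 : Real.exp ((p:ℝ)*(ε/2)) ≤ Real.exp (3*(k:ℝ) + 0.3) := by
    apply Real.exp_le_exp.mpr
    have : (p:ℝ)*(ε/2) = ((p:ℝ)*ε)/2 := by ring
    rw [this]
    linarith
  have hexp03 : Real.exp (0.3:ℝ) ≤ 10/7 := by
    have h := Real.add_one_le_exp (-(0.3:ℝ))
    rw [Real.exp_neg] at h
    have he : (0:ℝ) < Real.exp (0.3:ℝ) := Real.exp_pos _
    have hc : Real.exp (0.3:ℝ) * (Real.exp (0.3:ℝ))⁻¹ = 1 := mul_inv_cancel₀ he.ne'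
    have h2 := mul_le_mul_of_nonneg_left h he.le
    rw [hc] at h2
    nlinarith [h2, he]
  have hstep3 : Real.exp (3*(k:ℝ)+0.3) ≤ (10/7) * u^(3*k) := by
    rw [Real.exp_add]
    have h1 : Real.exp (3*(k:ℝ)) = u^(3*k) := by
      rw [← hexpnat (3*k)]
      congr 1
      push_cast; ring
    rw [h1]
    calc u^(3*k) * Real.exp (0.3:ℝ) ≤ u^(3*k) * (10/7) :=
          mul_le_mul_of_nonneg_left hexp03 (by positivity)
      _ = (10/7) * u^(3*k) := by ring
  -- numeric core
  have hW : (10/7) * u^(3*k)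
      ≤ (p.choose (2*k):ℝ)*ε^(2*k) + (p.choose (4*k):ℝ)*ε^(4*k) := by
    have hbase : (40/7)*(k:ℝ)*u^(k+1) ≤ 2*(2.9:ℝ)^(2*k) + (1.4:ℝ)^(4*k) * u^(2*k) := by
      have h1 : (8.41:ℝ)^k = (2.9:ℝ)^(2*k) := by rw [pow_mul]; norm_num
      have h2 : (3.8416*7.387524:ℝ)^k ≤ (1.4:ℝ)^(4*k) * u^(2*k) := by
        rw [pow_mul, pow_mul, ← mul_pow]
        apply pow_le_pow_left₀ (by norm_num)
        nlinarith [hu1]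
      calc (40/7)*(k:ℝ)*u^(k+1) ≤ (40/7)*(k:ℝ)*(2.719:ℝ)^(k+1) := by
            apply mul_le_mul_of_nonneg_left (pow_le_pow_left₀ hu_pos.le hu2 _) (by positivity)
        _ = (40/7)*2.719*(k:ℝ)*(2.719:ℝ)^k := by rw [pow_succ]; ring
        _ ≤ 2*(8.41:ℝ)^k + (3.8416*7.387524:ℝ)^k := numAux k hk
        _ ≤ 2*(2.9:ℝ)^(2*k) + (1.4:ℝ)^(4*k) * u^(2*k) := by rw [← h1]; linarith
    have huu : u^(2*k) * u^(2*k) = u^(4*k) := by rw [← pow_add]; congr 1; omega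
    have hW2 : (40/7)*(k:ℝ)*u^(3*k+1)
        ≤ 2*((2.9:ℝ)^(2*k)*u^(2*k)) + (1.4:ℝ)^(4*k)*u^(4*k) := by
      calc (40/7)*(k:ℝ)*u^(3*k+1) = ((40/7)*(k:ℝ)*u^(k+1))*u^(2*k) := by
            rw [mul_assoc, mul_assoc, ← pow_add, show k+1+2*k = 3*k+1 from by omega,
              ← mul_assoc]
        _ ≤ (2*(2.9:ℝ)^(2*k) + (1.4:ℝ)^(4*k)*u^(2*k))*u^(2*k) :=
            mul_le_mul_of_nonneg_right hbase (by positivity)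
        _ = 2*((2.9:ℝ)^(2*k)*u^(2*k)) + (1.4:ℝ)^(4*k)*(u^(2*k)*u^(2*k)) := by ring
        _ = 2*((2.9:ℝ)^(2*k)*u^(2*k)) + (1.4:ℝ)^(4*k)*u^(4*k) := by rw [huu]
    have h4ku : (0:ℝ) < 4*(k:ℝ)*u := by positivity
    have hfin : (4*(k:ℝ)*u) * ((10/7)*u^(3*k))
        ≤ (4*(k:ℝ)*u) * ((p.choose (2*k):ℝ)*ε^(2*k) + (p.choose (4*k):ℝ)*ε^(4*k)) := by
      calc (4*(k:ℝ)*u) * ((10/7)*u^(3*k)) = (40/7)*(k:ℝ)*u^(3*k+1) := by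
            rw [pow_succ]; ring
        _ ≤ 2*((2.9:ℝ)^(2*k)*u^(2*k)) + (1.4:ℝ)^(4*k)*u^(4*k) := hW2
        _ ≤ 2*(u * (2*(k:ℝ)) * ((p.choose (2*k):ℝ)*ε^(2*k)))
              + u * (4*(k:ℝ)) * ((p.choose (4*k):ℝ)*ε^(4*k)) := by
            linarith
        _ = (4*(k:ℝ)*u) * ((p.choose (2*k):ℝ)*ε^(2*k) + (p.choose (4*k):ℝ)*ε^(4*k)) := by
            ring
    exact le_of_mul_le_mul_left hfin h4ku
  -- put everything together
  calc (1+ε/2)^p ≤ Real.exp ((p:ℝ)*(ε/2)) := hstep1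
    _ ≤ Real.exp (3*(k:ℝ)+0.3) := hstep2
    _ ≤ (10/7) * u^(3*k) := hstep3
    _ ≤ (p.choose (2*k):ℝ)*ε^(2*k) + (p.choose (4*k):ℝ)*ε^(4*k) := hW
    _ ≤ (p.choose (2*k):ℝ) * ∫ ω, X ω ^ (2*k) ∂μ
          + (p.choose (4*k):ℝ) * ∫ ω, X ω ^ (4*k) ∂μ :=
        add_le_add (mul_le_mul_of_nonneg_left hmm2 (Nat.cast_nonneg _))
          (mul_le_mul_of_nonneg_left hmm4 (Nat.cast_nonneg _))
    _ = ∑ r ∈ ({2*k, 4*k} : Finset ℕ), (p.choose r : ℝ) * ∫ ω, X ω ^ r ∂μ := hpair.symm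
    _ ≤ ∑ r ∈ Finset.range (p+1), (p.choose r : ℝ) * ∫ ω, X ω ^ r ∂μ := hdrop
    _ = ∫ ω, (X ω + 1) ^ p ∂μ := hexpand.symm
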